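/- Define the replica-symmetric trial pressure Ā(p̄,q̄) = log 2 + α E_g[log cosh(gβ√(2(1-α)p̄))] + (1-α) E_g[log cosh(gβ√(2α q̄))] + α(1-α)β²(1-q̄)(1-p̄) for p̄,q̄ ∈ [0,1], where g is a standard Gaussian. Then ∂_{p̄}Ā = α(1-α)β²(q̄ − E_g[tanh²(gβ√(2(1-α)p̄))]), and since p̄ ↦ E_g[tanh²(gβ√(2(1-α)p̄))] is nondecreasing, Ā is concave in p̄ for each fixed q̄. -/

import Mathlib

open MeasureTheory ProbabilityTheory Real Filter Set
open scoped NNReal ENNReal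

namespace SG


lemma tanh_sq_eq (x : ℝ) : Real.tanh x ^ 2 = 1 - (Real.cosh x ^ 2)⁻¹ := by
  have hc : Real.cosh x ≠ 0 := (Real.cosh_pos x).ne'
  rw [Real.tanh_eq_sinh_div_cosh, div_pow, Real.sinh_sq]
  field_simp

lemma one_sub_tanh_sq (x : ℝ) : 1 - Real.tanh x ^ 2 = (Real.cosh x ^ 2)⁻¹ := by
  rw [tanh_sq_eq]; ring

lemma tanh_sq_le_one (x : ℝ) : Real.tanh x ^ 2 ≤ 1 := by
  rw [tanh_sq_eq]
  have : 0 < (Real.cosh x ^ 2)⁻¹ := by positivity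
  linarith

lemma abs_tanh_le_one (x : ℝ) : |Real.tanh x| ≤ 1 :=
  abs_le_one_iff_mul_self_le_one.2 (by have := tanh_sq_le_one x; nlinarith)

lemma tanh_sq_mono {a b : ℝ} (h : |a| ≤ |b|) : Real.tanh a ^ 2 ≤ Real.tanh b ^ 2 := by
  rw [tanh_sq_eq, tanh_sq_eq]
  have hca : 0 < Real.cosh a := Real.cosh_pos a
  have hcb : Real.cosh a ≤ Real.cosh b := Real.cosh_le_cosh.2 h
  have : Real.cosh a ^ 2 ≤ Real.cosh b ^ 2 := by nlinarith
  have hinv : (Real.cosh b ^ 2)⁻¹ ≤ (Real.cosh a ^ 2)⁻¹ := by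
    apply inv_anti₀ (by positivity) this
  linarith

lemma hasDerivAt_tanh (x : ℝ) : HasDerivAt Real.tanh (1 - Real.tanh x ^ 2) x := by
  have hc : Real.cosh x ≠ 0 := (Real.cosh_pos x).ne'
  have h := (Real.hasDerivAt_sinh x).div (Real.hasDerivAt_cosh x) hc
  have heq : (Real.cosh x * Real.cosh x - Real.sinh x * Real.sinh x) / Real.cosh x ^ 2
      = 1 - Real.tanh x ^ 2 := by
    rw [one_sub_tanh_sq]
    have h1 : Real.cosh x * Real.cosh x - Real.sinh x * Real.sinh x = 1 := by
      have := Real.cosh_sq_sub_sinh_sq x; nlinarith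
    rw [h1, one_div]
  have hfun : Real.tanh = fun y => Real.sinh y / Real.cosh y :=
    funext fun y => Real.tanh_eq_sinh_div_cosh y
  have h2 : HasDerivAt (fun y => Real.sinh y / Real.cosh y) (1 - Real.tanh x ^ 2) x :=
    heq ▸ h
  rw [hfun]
  convert h2 using 2
  simp only [← Real.tanh_eq_sinh_div_cosh]

lemma continuous_tanh : Continuous Real.tanh := by
  have hfun : Real.tanh = fun y => Real.sinh y / Real.cosh y :=
    funext fun y => Real.tanh_eq_sinh_div_cosh y
  rw [hfun]
  exact Real.continuous_sinh.div Real.continuous_cosh fun y => (Real.cosh_pos y).ne'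

lemma hasDerivAt_logcosh (x : ℝ) :
    HasDerivAt (fun y => Real.log (Real.cosh y)) (Real.tanh x) x := by
  have h := (Real.hasDerivAt_cosh x).log (Real.cosh_pos x).ne'
  rwa [← Real.tanh_eq_sinh_div_cosh] at h

lemma logcosh_nonneg (x : ℝ) : 0 ≤ Real.log (Real.cosh x) :=
  Real.log_nonneg (Real.one_le_cosh x)

lemma logcosh_le_abs (x : ℝ) : Real.log (Real.cosh x) ≤ |x| := by
  rw [Real.log_le_iff_le_exp (Real.cosh_pos x)]
  rw [← Real.cosh_abs, Real.cosh_eq]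
  have h1 : Real.exp (-|x|) ≤ Real.exp |x| := Real.exp_le_exp.2 (neg_abs_le x |>.trans (le_abs_self x))
  linarith

lemma abs_logcosh_le (x : ℝ) : |Real.log (Real.cosh x)| ≤ |x| := by
  rw [abs_of_nonneg (logcosh_nonneg x)]; exact logcosh_le_abs x



lemma pdf_eq (x : ℝ) :
    gaussianPDFReal 0 1 x = (Real.sqrt (2 * π))⁻¹ * Real.exp (-(x ^ 2 / 2)) := by
  simp [gaussianPDFReal]
  norm_num
  left; ring

lemma integral_gauss (f : ℝ → ℝ) :
    ∫ x, f x ∂(gaussianReal 0 1) = ∫ x, gaussianPDFReal 0 1 x * f x := by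
  rw [gaussianReal_of_var_ne_zero 0 one_ne_zero]
  have hd : gaussianPDF 0 1 = fun x => ((Real.toNNReal (gaussianPDFReal 0 1 x) : ℝ≥0) : ℝ≥0∞) :=
    rfl
  rw [hd, integral_withDensity_eq_integral_smul
    ((measurable_gaussianPDFReal 0 1).real_toNNReal) f]
  congr 1
  funext x
  simp [NNReal.smul_def, Real.coe_toNNReal _ (gaussianPDFReal_nonneg 0 1 x)]

lemma integrable_gauss_iff {f : ℝ → ℝ} :
    Integrable f (gaussianReal 0 1) ↔
      Integrable (fun x => f x * gaussianPDFReal 0 1 x) volume := by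
  rw [gaussianReal_of_var_ne_zero 0 one_ne_zero]
  rw [integrable_withDensity_iff (measurable_gaussianPDF 0 1)
    (ae_of_all _ fun x => ENNReal.ofReal_lt_top)]
  exact integrable_congr (ae_of_all _ fun x => by
    simp [gaussianPDF, ENNReal.toReal_ofReal (gaussianPDFReal_nonneg 0 1 x)])

lemma int_exp : Integrable (fun x : ℝ => Real.exp (-(x ^ 2 / 2))) volume := by
  have h := integrable_exp_neg_mul_sq (b := (1 : ℝ)/2) (by norm_num)
  refine h.congr (ae_of_all _ fun x => ?_)
  simp only []
  ring_nf

lemma int_abs_exp : Integrable (fun x : ℝ => |x| * Real.exp (-(x ^ 2 / 2))) volume := by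
  have h := (integrable_mul_exp_neg_mul_sq (b := (1 : ℝ)/2) (by norm_num)).abs
  refine h.congr (ae_of_all _ fun x => ?_)
  simp only [abs_mul, abs_of_pos (Real.exp_pos _)]
  ring_nf

lemma continuous_pdf : Continuous (gaussianPDFReal 0 1) := by
  have : gaussianPDFReal 0 1 = fun x => (Real.sqrt (2 * π))⁻¹ * Real.exp (-(x ^ 2 / 2)) :=
    funext pdf_eq
  rw [this]
  fun_prop

lemma integrable_abs_gauss : Integrable (fun x => |x|) (gaussianReal 0 1) := by
  rw [integrable_gauss_iff]
  have h := int_abs_exp.const_mul (Real.sqrt (2 * π))⁻¹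
  refine h.congr (ae_of_all _ fun x => ?_)
  simp only [pdf_eq]; ring

lemma integrable_of_bdd {f : ℝ → ℝ} {C : ℝ} (hf : Continuous f) (h : ∀ x, |f x| ≤ C) :
    Integrable f (gaussianReal 0 1) :=
  ⟨hf.aestronglyMeasurable,
    HasFiniteIntegral.of_bounded (C := C) (ae_of_all _ fun x => by
      simpa [Real.norm_eq_abs] using h x)⟩




lemma continuous_pdfmul {h : ℝ → ℝ} (hh : Continuous h) :
    Continuous (fun x => gaussianPDFReal 0 1 x * h x) := continuous_pdf.mul hh

lemma tendsto_exp_sq_atTop : Tendsto (fun x : ℝ => Real.exp (-(x ^ 2 / 2))) atTop (nhds 0) := by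
  apply Real.tendsto_exp_atBot.comp
  apply Filter.tendsto_neg_atTop_atBot.comp
  exact (tendsto_pow_atTop (two_ne_zero)).atTop_div_const (by norm_num)

lemma tendsto_exp_sq_atBot : Tendsto (fun x : ℝ => Real.exp (-(x ^ 2 / 2))) atBot (nhds 0) := by
  have h : Tendsto (fun x : ℝ => Real.exp (-(|x| ^ 2 / 2))) atBot (nhds 0) :=
    tendsto_exp_sq_atTop.comp tendsto_abs_atBot_atTop
  refine h.congr fun x => by rw [sq_abs]

/-- Gaussian integration by parts (Stein's lemma) for `tanh`. -/
lemma stein (c : ℝ) :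
    ∫ x, x * Real.tanh (c * x) ∂(gaussianReal 0 1)
      = c * ∫ x, (1 - Real.tanh (c * x) ^ 2) ∂(gaussianReal 0 1) := by
  set κ : ℝ := (Real.sqrt (2 * π))⁻¹ with hκ
  have hκpos : 0 < κ := by
    rw [hκ]; positivity
  set φ : ℝ → ℝ := fun x => Real.exp (-(x ^ 2 / 2)) with hφ
  have hφpos : ∀ x, 0 < φ x := fun x => Real.exp_pos _
  have hpdf : ∀ x, gaussianPDFReal 0 1 x = κ * φ x := pdf_eq
  set h1 : ℝ → ℝ := fun x => gaussianPDFReal 0 1 x * (x * Real.tanh (c * x)) with hh1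
  set h2 : ℝ → ℝ := fun x => gaussianPDFReal 0 1 x * (c * (1 - Real.tanh (c * x) ^ 2)) with hh2
  have hcont1 : Continuous h1 :=
    continuous_pdfmul (continuous_id.mul (continuous_tanh.comp (continuous_const.mul continuous_id)))
  have hcont2 : Continuous h2 := by
    apply continuous_pdfmul
    exact continuous_const.mul (continuous_const.sub
      ((continuous_tanh.comp (continuous_const.mul continuous_id)).pow 2))
  -- integrability
  have hint1 : Integrable h1 volume := by
    refine Integrable.mono' (int_abs_exp.const_mul κ) hcont1.aestronglyMeasurable
      (ae_of_all _ fun x => ?_)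
    have hb : |x * Real.tanh (c * x)| ≤ |x| := by
      rw [abs_mul]
      calc |x| * |Real.tanh (c * x)| ≤ |x| * 1 :=
            mul_le_mul_of_nonneg_left (abs_tanh_le_one _) (abs_nonneg x)
        _ = |x| := mul_one _
    have habs : ‖h1 x‖ = κ * φ x * |x * Real.tanh (c * x)| := by
      rw [Real.norm_eq_abs, hh1]
      show |gaussianPDFReal 0 1 x * (x * Real.tanh (c * x))| = _
      rw [hpdf x, abs_mul, abs_of_pos (mul_pos hκpos (hφpos x))]
    rw [habs]
    calc κ * φ x * |x * Real.tanh (c * x)| ≤ κ * φ x * |x| := by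
          exact mul_le_mul_of_nonneg_left hb (by positivity)
      _ = κ * (|x| * φ x) := by ring
  have hint2 : Integrable h2 volume := by
    refine Integrable.mono' (int_exp.const_mul (κ * |c|)) hcont2.aestronglyMeasurable
      (ae_of_all _ fun x => ?_)
    have hb : |c * (1 - Real.tanh (c * x) ^ 2)| ≤ |c| := by
      rw [abs_mul]
      have h01 : |1 - Real.tanh (c * x) ^ 2| ≤ 1 := by
        rw [abs_of_nonneg (by have := tanh_sq_le_one (c * x); linarith)]
        have : 0 ≤ Real.tanh (c * x) ^ 2 := sq_nonneg _
        linarith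
      calc |c| * |1 - Real.tanh (c * x) ^ 2| ≤ |c| * 1 :=
            mul_le_mul_of_nonneg_left h01 (abs_nonneg c)
        _ = |c| := mul_one _
    have habs : ‖h2 x‖ = κ * φ x * |c * (1 - Real.tanh (c * x) ^ 2)| := by
      rw [Real.norm_eq_abs, hh2]
      show |gaussianPDFReal 0 1 x * (c * (1 - Real.tanh (c * x) ^ 2))| = _
      rw [hpdf x, abs_mul, abs_of_pos (mul_pos hκpos (hφpos x))]
    rw [habs]
    calc κ * φ x * |c * (1 - Real.tanh (c * x) ^ 2)| ≤ κ * φ x * |c| := by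
          exact mul_le_mul_of_nonneg_left hb (by positivity)
      _ = κ * |c| * φ x := by ring
  have hfint : Integrable (fun x => h1 x - h2 x) volume := hint1.sub hint2
  -- the antiderivative
  set F : ℝ → ℝ := fun x => -(κ * (Real.tanh (c * x) * φ x)) with hF
  have hderiv : ∀ x, HasDerivAt F (h1 x - h2 x) x := by
    intro x
    have ht : HasDerivAt (fun y => Real.tanh (c * y)) ((1 - Real.tanh (c * x) ^ 2) * c) x := by
      have := (hasDerivAt_tanh (c * x)).comp x ((hasDerivAt_id x).const_mul c)
      exact this.congr_deriv (by ring)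
    have hφ' : HasDerivAt φ (φ x * -x) x := by
      have h0 := ((hasDerivAt_pow 2 x).div_const 2).neg
      have hx : HasDerivAt (fun y : ℝ => -(y ^ 2 / 2)) (-x) x := by
        exact h0.congr_deriv (by norm_num)
      exact hx.exp
    have := ((ht.mul hφ').const_mul κ).neg
    refine this.congr_deriv ?_
    rw [hh1, hh2]
    simp only [hpdf]
    ring
  -- limits at infinity
  have hFbound : ∀ x, ‖F x‖ ≤ κ * φ x := by
    intro x
    have hshow : ‖F x‖ = κ * (|Real.tanh (c * x)| * φ x) := by
      rw [hF, Real.norm_eq_abs]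
      show |(-(κ * (Real.tanh (c * x) * φ x)))| = _
      rw [abs_neg, abs_mul, abs_mul, abs_of_pos hκpos, abs_of_pos (hφpos x)]
    rw [hshow]
    calc κ * (|Real.tanh (c * x)| * φ x) ≤ κ * (1 * φ x) := by
          apply mul_le_mul_of_nonneg_left _ hκpos.le
          exact mul_le_mul_of_nonneg_right (abs_tanh_le_one _) (hφpos x).le
      _ = κ * φ x := by ring
  have hlimTop : Tendsto F atTop (nhds 0) :=
    squeeze_zero_norm hFbound (by simpa using tendsto_exp_sq_atTop.const_mul κ)
  have hlimBot : Tendsto F atBot (nhds 0) :=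
    squeeze_zero_norm hFbound (by simpa using tendsto_exp_sq_atBot.const_mul κ)
  -- FTC on the whole line
  have hIic : ∫ x in Iic (0 : ℝ), (h1 x - h2 x) = F 0 - 0 :=
    integral_Iic_of_hasDerivAt_of_tendsto' (fun x _ => hderiv x) hfint.integrableOn hlimBot
  have hIoi : ∫ x in Ioi (0 : ℝ), (h1 x - h2 x) = 0 - F 0 :=
    integral_Ioi_of_hasDerivAt_of_tendsto' (fun x _ => hderiv x) hfint.integrableOn hlimTop
  have hzero : ∫ x, (h1 x - h2 x) = 0 := by
    rw [← intervalIntegral.integral_Iic_add_Ioi hfint.integrableOn hfint.integrableOn, hIic, hIoi]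
    ring
  have hkey : ∫ x, h1 x = ∫ x, h2 x := by
    have := integral_sub hint1 hint2
    rw [hzero] at this
    linarith [this]
  -- transfer back to the Gaussian measure
  rw [integral_gauss, integral_gauss]
  calc ∫ x, gaussianPDFReal 0 1 x * (x * Real.tanh (c * x)) = ∫ x, h1 x := rfl
    _ = ∫ x, h2 x := hkey
    _ = c * ∫ x, gaussianPDFReal 0 1 x * (1 - Real.tanh (c * x) ^ 2) := by
        rw [← integral_const_mul]
        congr 1
        funext x
        rw [hh2]
        ring





lemma continuous_logcosh : Continuous (fun y : ℝ => Real.log (Real.cosh y)) := by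
  rw [continuous_iff_continuousAt]
  intro y
  exact (Real.continuousAt_log (Real.cosh_pos y).ne').comp Real.continuous_cosh.continuousAt

lemma cont_lc (c : ℝ) : Continuous (fun x : ℝ => Real.log (Real.cosh (x * c))) :=
  continuous_logcosh.comp (continuous_id.mul continuous_const)

lemma cont_th (c : ℝ) : Continuous (fun x : ℝ => Real.tanh (x * c) ^ 2) :=
  ((continuous_tanh.comp (continuous_id.mul continuous_const)).pow 2)

lemma int_logcosh (c : ℝ) :
    Integrable (fun x => Real.log (Real.cosh (x * c))) (gaussianReal 0 1) := by
  refine Integrable.mono' (integrable_abs_gauss.mul_const |c|) (cont_lc c).aestronglyMeasurable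
    (ae_of_all _ fun x => ?_)
  rw [Real.norm_eq_abs]
  calc |Real.log (Real.cosh (x * c))| ≤ |x * c| := abs_logcosh_le _
    _ = |x| * |c| := abs_mul x c

lemma int_tanh_sq (c : ℝ) :
    Integrable (fun x => Real.tanh (x * c) ^ 2) (gaussianReal 0 1) :=
  integrable_of_bdd (cont_th c) fun x => by
    rw [abs_of_nonneg (sq_nonneg _)]; exact tanh_sq_le_one _

lemma int_one_sub_tanh_sq (c : ℝ) :
    ∫ x, (1 - Real.tanh (c * x) ^ 2) ∂(gaussianReal 0 1)
      = 1 - ∫ x, Real.tanh (x * c) ^ 2 ∂(gaussianReal 0 1) := by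
  have h1 : Integrable (fun _ : ℝ => (1 : ℝ)) (gaussianReal 0 1) := integrable_const 1
  have h2 : Integrable (fun x => Real.tanh (c * x) ^ 2) (gaussianReal 0 1) := by
    refine (int_tanh_sq c).congr (ae_of_all _ fun x => by show Real.tanh (x*c)^2 = Real.tanh (c*x)^2; rw [mul_comm])
  rw [integral_sub h1 h2]
  have : ∫ x, Real.tanh (c * x) ^ 2 ∂(gaussianReal 0 1)
      = ∫ x, Real.tanh (x * c) ^ 2 ∂(gaussianReal 0 1) := by
    congr 1; funext x; rw [mul_comm]
  rw [this]
  simp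

/-- Differentiation under the integral sign for the Gaussian `log cosh` functional. -/
lemma hasDerivAt_G (k : ℝ) (hk : 0 < k) {p : ℝ} (hp : 0 < p) :
    HasDerivAt (fun p' => ∫ x, Real.log (Real.cosh (x * (k * Real.sqrt p'))) ∂(gaussianReal 0 1))
      (k ^ 2 / 2 * (1 - ∫ x, Real.tanh (x * (k * Real.sqrt p)) ^ 2 ∂(gaussianReal 0 1))) p := by
  have hsp : 0 < Real.sqrt p := Real.sqrt_pos.2 hp
  have hsp2 : 0 < Real.sqrt (p / 2) := Real.sqrt_pos.2 (by linarith)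
  set F : ℝ → ℝ → ℝ := fun p' x => Real.log (Real.cosh (x * (k * Real.sqrt p'))) with hFdef
  set F' : ℝ → ℝ → ℝ :=
    fun p' x => Real.tanh (x * (k * Real.sqrt p')) * (x * (k * (1 / (2 * Real.sqrt p')))) with hF'def
  have hballpos : ∀ p' ∈ Metric.ball p (p / 2), p / 2 < p' := by
    intro p' hp'
    have := abs_lt.1 (by simpa [Real.dist_eq] using hp')
    linarith [this.1]
  have key := hasDerivAt_integral_of_dominated_loc_of_deriv_le
    (μ := gaussianReal 0 1) (F := F) (F' := F') (x₀ := p)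
    (bound := fun x => |x| * (k * (1 / (2 * Real.sqrt (p / 2)))))
    (Metric.ball_mem_nhds p (by linarith : (0:ℝ) < p / 2))
    (Eventually.of_forall fun p' => (cont_lc (k * Real.sqrt p')).aestronglyMeasurable)
    (int_logcosh (k * Real.sqrt p))
    ((continuous_tanh.comp (continuous_id.mul continuous_const)).mul
      (continuous_id.mul continuous_const)).aestronglyMeasurable
    (ae_of_all _ fun x => ?_) (integrable_abs_gauss.mul_const _)
    (ae_of_all _ fun x => ?_)
  · -- conclusion: massage the derivative value
    have h2 := key.2
    have hc : ∫ x, F' p x ∂(gaussianReal 0 1)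
        = k ^ 2 / 2 * (1 - ∫ x, Real.tanh (x * (k * Real.sqrt p)) ^ 2 ∂(gaussianReal 0 1)) := by
      set c : ℝ := k * Real.sqrt p with hc
      set d : ℝ := k * (1 / (2 * Real.sqrt p)) with hd
      have hrw : (fun x => F' p x) = fun x => x * Real.tanh (c * x) * d := by
        funext x
        rw [hF'def]
        simp only []
        rw [mul_comm c x]
        ring
      rw [hrw, integral_mul_const, stein c, int_one_sub_tanh_sq c]
      have hcd : c * d = k ^ 2 / 2 := by
        rw [hc, hd]
        field_simp
      calc c * (1 - ∫ x, Real.tanh (x * c) ^ 2 ∂(gaussianReal 0 1)) * d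
          = c * d * (1 - ∫ x, Real.tanh (x * c) ^ 2 ∂(gaussianReal 0 1)) := by ring
        _ = k ^ 2 / 2 * (1 - ∫ x, Real.tanh (x * (k * Real.sqrt p)) ^ 2 ∂(gaussianReal 0 1)) := by
            rw [hcd, hc]
    rwa [hc] at h2
  · -- the bound
    intro p' hp'
    have h1 : p / 2 < p' := hballpos p' hp'
    have hsp' : Real.sqrt (p / 2) ≤ Real.sqrt p' := Real.sqrt_le_sqrt (by linarith)
    have hsp'pos : 0 < Real.sqrt p' := lt_of_lt_of_le hsp2 hsp'
    rw [hF'def, Real.norm_eq_abs]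
    simp only []
    rw [abs_mul]
    calc |Real.tanh (x * (k * Real.sqrt p'))| * |x * (k * (1 / (2 * Real.sqrt p')))|
        ≤ 1 * |x * (k * (1 / (2 * Real.sqrt p')))| :=
          mul_le_mul_of_nonneg_right (abs_tanh_le_one _) (abs_nonneg _)
      _ = |x| * (k * (1 / (2 * Real.sqrt p'))) := by
          rw [one_mul, abs_mul]
          congr 1
          rw [abs_of_pos (by positivity)]
      _ ≤ |x| * (k * (1 / (2 * Real.sqrt (p / 2)))) := by
          apply mul_le_mul_of_nonneg_left _ (abs_nonneg x)
          apply mul_le_mul_of_nonneg_left _ hk.le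
          exact one_div_le_one_div_of_le (by positivity)
            (by have := mul_le_mul_of_nonneg_left hsp' (by norm_num : (0:ℝ) ≤ 2); linarith)
  · -- the derivative of the integrand
    intro p' hp'
    have h1 : p / 2 < p' := hballpos p' hp'
    have hp'pos : 0 < p' := lt_trans (by linarith) h1
    have hsq : HasDerivAt Real.sqrt (1 / (2 * Real.sqrt p')) p' :=
      Real.hasDerivAt_sqrt hp'pos.ne'
    have hlin : HasDerivAt (fun y => x * (k * Real.sqrt y)) (x * (k * (1 / (2 * Real.sqrt p')))) p' :=
      (hsq.const_mul k).const_mul x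
    have := (hasDerivAt_logcosh (x * (k * Real.sqrt p'))).comp p' hlin
    exact this





lemma continuous_G (k : ℝ) :
    Continuous (fun p => ∫ x, Real.log (Real.cosh (x * (k * Real.sqrt p)))
      ∂(gaussianReal 0 1)) := by
  rw [continuous_iff_continuousAt]
  intro p₀
  apply continuousAt_of_dominated (bound := fun x => |x| * (|k| * Real.sqrt (|p₀| + 1)))
  · exact Eventually.of_forall fun p => (cont_lc (k * Real.sqrt p)).aestronglyMeasurable
  · filter_upwards [Metric.ball_mem_nhds p₀ one_pos] with p hp
    refine ae_of_all _ fun x => ?_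
    have hd : |p - p₀| < 1 := by simpa [Real.dist_eq] using hp
    have hple : p ≤ |p₀| + 1 := by
      have h1 := (abs_lt.1 hd).2
      have h2 := le_abs_self p₀
      linarith
    have hsp : Real.sqrt p ≤ Real.sqrt (|p₀| + 1) := Real.sqrt_le_sqrt hple
    rw [Real.norm_eq_abs]
    calc |Real.log (Real.cosh (x * (k * Real.sqrt p)))| ≤ |x * (k * Real.sqrt p)| :=
          abs_logcosh_le _
      _ = |x| * (|k| * Real.sqrt p) := by
          rw [abs_mul, abs_mul, abs_of_nonneg (Real.sqrt_nonneg p)]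
      _ ≤ |x| * (|k| * Real.sqrt (|p₀| + 1)) := by
          apply mul_le_mul_of_nonneg_left _ (abs_nonneg x)
          exact mul_le_mul_of_nonneg_left hsp (abs_nonneg k)
  · exact integrable_abs_gauss.mul_const _
  · refine ae_of_all _ fun x => ?_
    have : Continuous fun p => Real.log (Real.cosh (x * (k * Real.sqrt p))) :=
      continuous_logcosh.comp
        (continuous_const.mul (continuous_const.mul Real.continuous_sqrt))
    exact this.continuousAt

lemma mono_T (k : ℝ) :
    MonotoneOn (fun p => ∫ x, Real.tanh (x * (k * Real.sqrt p)) ^ 2 ∂(gaussianReal 0 1))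
      (Ici (0 : ℝ)) := by
  intro p1 _ p2 _ h12
  refine integral_mono (int_tanh_sq _) (int_tanh_sq _) fun x => ?_
  apply tanh_sq_mono
  have hsp : Real.sqrt p1 ≤ Real.sqrt p2 := Real.sqrt_le_sqrt h12
  calc |x * (k * Real.sqrt p1)| = |x| * (|k| * Real.sqrt p1) := by
        rw [abs_mul, abs_mul, abs_of_nonneg (Real.sqrt_nonneg p1)]
    _ ≤ |x| * (|k| * Real.sqrt p2) := by
        apply mul_le_mul_of_nonneg_left _ (abs_nonneg x)
        exact mul_le_mul_of_nonneg_left hsp (abs_nonneg k)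
    _ = |x * (k * Real.sqrt p2)| := by
        rw [abs_mul, abs_mul, abs_of_nonneg (Real.sqrt_nonneg p2)]



end SG

/-- Replica-symmetric trial pressure for the bipartite spin glass. -/
noncomputable def Abar (α β p q : ℝ) : ℝ :=
  Real.log 2
    + α * ∫ g : ℝ, Real.log (Real.cosh (g * β * Real.sqrt (2 * (1 - α) * p)))
        ∂(gaussianReal 0 1)
    + (1 - α) * ∫ g : ℝ, Real.log (Real.cosh (g * β * Real.sqrt (2 * α * q)))
        ∂(gaussianReal 0 1)
    + α * (1 - α) * β ^ 2 * (1 - q) * (1 - p)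

theorem Abar_concave_in_p (α β : ℝ) (hα : α ∈ Set.Ioo (0 : ℝ) 1) (hβ : 0 < β)
    (q : ℝ) (hq : q ∈ Set.Icc (0 : ℝ) 1) :
    (∀ p ∈ Set.Ioo (0 : ℝ) 1,
      HasDerivAt (fun p' => Abar α β p' q)
        (α * (1 - α) * β ^ 2 *
          (q - ∫ g : ℝ, (Real.tanh (g * β * Real.sqrt (2 * (1 - α) * p))) ^ 2
              ∂(gaussianReal 0 1))) p) ∧
    MonotoneOn (fun p => ∫ g : ℝ,
        (Real.tanh (g * β * Real.sqrt (2 * (1 - α) * p))) ^ 2 ∂(gaussianReal 0 1))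
      (Set.Ici (0 : ℝ)) ∧
    ConcaveOn ℝ (Set.Icc (0 : ℝ) 1) (fun p => Abar α β p q) := by
  obtain ⟨hα0, hα1⟩ := hα
  have h2a : (0:ℝ) < 2 * (1 - α) := by linarith
  set k : ℝ := β * Real.sqrt (2 * (1 - α)) with hkdef
  have hk : 0 < k := mul_pos hβ (Real.sqrt_pos.2 h2a)
  have hk2 : k ^ 2 = 2 * (1 - α) * β ^ 2 := by
    rw [hkdef, mul_pow, Real.sq_sqrt h2a.le]; ring
  have harg : ∀ (p' x : ℝ), x * β * Real.sqrt (2 * (1 - α) * p') = x * (k * Real.sqrt p') := by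
    intro p' x
    rw [Real.sqrt_mul h2a.le, hkdef]; ring
  have hGrw : ∀ p' : ℝ,
      (∫ g : ℝ, Real.log (Real.cosh (g * β * Real.sqrt (2 * (1 - α) * p')))
          ∂(gaussianReal 0 1))
        = ∫ x, Real.log (Real.cosh (x * (k * Real.sqrt p'))) ∂(gaussianReal 0 1) := by
    intro p'; congr 1; funext x; rw [harg]
  have hTrw : ∀ p' : ℝ,
      (∫ g : ℝ, (Real.tanh (g * β * Real.sqrt (2 * (1 - α) * p'))) ^ 2
          ∂(gaussianReal 0 1))
        = ∫ x, Real.tanh (x * (k * Real.sqrt p')) ^ 2 ∂(gaussianReal 0 1) := by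
    intro p'; congr 1; funext x; rw [harg]
  set G : ℝ → ℝ :=
    fun p' => ∫ x, Real.log (Real.cosh (x * (k * Real.sqrt p'))) ∂(gaussianReal 0 1) with hGdef
  set T : ℝ → ℝ :=
    fun p' => ∫ x, Real.tanh (x * (k * Real.sqrt p')) ^ 2 ∂(gaussianReal 0 1) with hTdef
  set c2 : ℝ :=
    (1 - α) * ∫ g : ℝ, Real.log (Real.cosh (g * β * Real.sqrt (2 * α * q)))
      ∂(gaussianReal 0 1) with hc2
  set c3 : ℝ := α * (1 - α) * β ^ 2 * (1 - q) with hc3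
  have hAbar : ∀ p' : ℝ, Abar α β p' q = Real.log 2 + α * G p' + c2 + c3 * (1 - p') := by
    intro p'
    simp only [Abar]
    rw [hGrw p']
  have hderiv : ∀ p ∈ Set.Ioo (0:ℝ) 1,
      HasDerivAt (fun p' => Abar α β p' q) (α * (1 - α) * β ^ 2 * (q - T p)) p := by
    intro p hp
    have hG : HasDerivAt G (k ^ 2 / 2 * (1 - T p)) p := SG.hasDerivAt_G k hk hp.1
    have h1 : HasDerivAt (fun p' => Real.log 2 + α * G p' + c2 + c3 * (1 - p'))
        (α * (k ^ 2 / 2 * (1 - T p)) + c3 * (-1)) p := by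
      have hA := ((hG.const_mul α).const_add (Real.log 2)).add_const c2
      have hB : HasDerivAt (fun p' : ℝ => 1 - p') (-1) p := by
        simpa using (hasDerivAt_id p).const_sub 1
      exact hA.add (hB.const_mul c3)
    have hfun : (fun p' => Real.log 2 + α * G p' + c2 + c3 * (1 - p'))
        = fun p' => Abar α β p' q := funext fun p' => (hAbar p').symm
    rw [hfun] at h1
    convert h1 using 1
    rw [hk2, hc3]
    ring
  refine ⟨?_, ?_, ?_⟩
  · intro p hp
    rw [hTrw p]
    exact hderiv p hp
  · simp only [hTrw]
    exact SG.mono_T k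
  · have hcont : Continuous (fun p => Abar α β p q) := by
      have h1 : Continuous fun p' => Real.log 2 + α * G p' + c2 + c3 * (1 - p') :=
        ((continuous_const.add (continuous_const.mul (SG.continuous_G k))).add continuous_const).add
          (continuous_const.mul (continuous_const.sub continuous_id))
      have hfun : (fun p' => Real.log 2 + α * G p' + c2 + c3 * (1 - p'))
          = fun p' => Abar α β p' q := funext fun p' => (hAbar p').symm
      rwa [hfun] at h1
    apply AntitoneOn.concaveOn_of_deriv (convex_Icc 0 1) hcont.continuousOn
    · rw [interior_Icc]
      exact fun p hp => (hderiv p hp).differentiableAt.differentiableWithinAt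
    · rw [interior_Icc]
      intro p1 h1 p2 h2 h12
      rw [(hderiv p1 h1).deriv, (hderiv p2 h2).deriv]
      have hT : T p1 ≤ T p2 := SG.mono_T k h1.1.le h2.1.le h12
      have hco : 0 ≤ α * (1 - α) * β ^ 2 := by
        have := mul_pos (mul_pos hα0 (by linarith : (0:ℝ) < 1 - α)) (pow_pos hβ 2)
        linarith
      exact mul_le_mul_of_nonneg_left (by linarith) hco
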